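/- If two disjoint segments of the path part of G carry the same color sequence, and each contains an occurrence of ABACA with A mapped to a single letter placed at vertices of index ≡ 1 (mod 100), then using a shortcut arc v_{100j} → v_{100j+2} to skip one occurrence of A in the left segment produces an occurrence of ABACADABCA in G. -/

import Mathlib

/-- The arcs of the directed graph `G`: `v_i → v_{i+1}` and `v_{100i} → v_{100i+2}`. -/
def Arc (i j : ℕ) : Prop :=
  j = i + 1 ∨ (i % 100 = 0 ∧ j = i + 2)

/-- Vertex sequence of the shortcut path: consecutive integers starting at `q`,
but skipping the vertex `q + k`. -/
def skipFun (q k i : ℕ) : ℕ := if i < k then q + i else q + i + 1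

theorem skipFun_lt {q k i : ℕ} (h : i < k) : skipFun q k i = q + i := if_pos h

theorem skipFun_ge {q k i : ℕ} (h : ¬ i < k) : skipFun q k i = q + i + 1 := if_neg h

theorem skipFun_inj (q k : ℕ) : Function.Injective (skipFun q k) := by
  intro a b h
  unfold skipFun at h
  split_ifs at h <;> omega

theorem map_range_add {α : Type*} (g : ℕ → α) (a b : ℕ) :
    (List.range (a + b)).map g
      = (List.range a).map g ++ (List.range b).map (fun i => g (a + i)) := by
  rw [List.range_add, List.map_append, List.map_map]
  rfl

/-- Two disjoint, `mod 100`-aligned segments of the path of `G` with identical color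
sequences, each containing an occurrence `a·B·a·C·a` of `ABACA` with the letters `a`
at positions `≡ 1 (mod 100)`, combine — using a shortcut arc to skip one single-letter
occurrence of `a` — into a non-intersecting directed path whose color sequence is
`a·B·a·C·a·D·a·B·C·a`, an occurrence of `ABACADABCA`. -/
theorem stmt_19 {α : Type*} (col : ℕ → α) (s t L : ℕ)
    (hdisj : s + L ≤ t) (halign : t % 100 = s % 100)
    (hsame : ∀ j < L, col (s + j) = col (t + j))
    (q₁ q₂ q₃ : ℕ) (h1 : s ≤ q₁) (h12 : q₁ < q₂) (h23 : q₂ < q₃) (h3 : q₃ < s + L)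
    (hm1 : q₁ % 100 = 1) (hm2 : q₂ % 100 = 1) (hm3 : q₃ % 100 = 1)
    (a : α) (ha1 : col q₁ = a) (ha2 : col q₂ = a) (ha3 : col q₃ = a)
    (B C : List α)
    (hB : B = (List.range (q₂ - q₁ - 1)).map fun j => col (q₁ + 1 + j))
    (hC : C = (List.range (q₃ - q₂ - 1)).map fun j => col (q₂ + 1 + j)) :
    ∃ D : List α, D ≠ [] ∧ ∃ p : List ℕ, p.Nodup ∧ p.Chain' Arc ∧
      p.map col = [a] ++ B ++ [a] ++ C ++ [a] ++ D ++ [a] ++ B ++ C ++ [a] := by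
  obtain ⟨d, rfl⟩ : ∃ d, t = s + d := ⟨t - s, by omega⟩
  have hd100 : d % 100 = 0 := by omega
  -- translation invariance of colors on the two segments
  have hsame' : ∀ u, s ≤ u → u < s + L → col (u + d) = col u := by
    intro u hu1 hu2
    have h := hsame (u - s) (by omega)
    have e1 : s + (u - s) = u := by omega
    have e2 : s + d + (u - s) = u + d := by omega
    rw [e1, e2] at h
    exact h.symm
  have hgap : q₃ + 100 ≤ q₁ + d := by omega
  refine ⟨(List.range (q₁ + d - q₃ - 1)).map (fun j => col (q₃ + 1 + j)), ?_,
    (List.range (1 + (q₂ - q₁ - 1 + (1 + (q₃ - q₂ - 1 + (1 + (q₁ + d - q₃ - 1 +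
      (1 + (q₂ - q₁ - 1 + (q₃ - q₂ - 1 + 1)))))))))).map (skipFun q₁ (q₂ + d - q₁)),
    ?_, ?_, ?_⟩
  · -- D ≠ []
    have : q₁ + d - q₃ - 1 ≠ 0 := by omega
    simp [List.map_eq_nil_iff, List.range_eq_nil, this]
  · -- Nodup
    exact List.nodup_range.map (skipFun_inj _ _)
  · -- Chain' Arc
    rw [List.Chain', List.isChain_map]
    obtain ⟨M, hM⟩ : ∃ M, 1 + (q₂ - q₁ - 1 + (1 + (q₃ - q₂ - 1 + (1 + (q₁ + d - q₃ - 1 +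
        (1 + (q₂ - q₁ - 1 + (q₃ - q₂ - 1 + 1)))))))) = M + 1 :=
      ⟨q₂ - q₁ + (q₃ - q₂ + (q₁ + d - q₃ + (q₂ - q₁ + (q₃ - q₂ - 1)))), by omega⟩
    rw [hM, List.isChain_range_succ]
    intro m hm
    show Arc (skipFun q₁ (q₂ + d - q₁) m) (skipFun q₁ (q₂ + d - q₁) (m + 1))
    by_cases hc1 : m + 1 < q₂ + d - q₁
    · rw [skipFun_lt (by omega), skipFun_lt hc1]
      exact Or.inl (by omega)
    · by_cases hc2 : m < q₂ + d - q₁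
      · rw [skipFun_lt hc2, skipFun_ge hc1]
        exact Or.inr ⟨by omega, by omega⟩
      · rw [skipFun_ge hc2, skipFun_ge hc1]
        exact Or.inl (by omega)
  · -- colors
    rw [List.map_map]
    simp only [map_range_add, Function.comp_apply, List.append_assoc]
    rw [hB, hC]
    congr 1
    · -- first [a]
      rw [show List.range 1 = [0] from rfl]
      simp only [List.map_cons, List.map_nil, Function.comp_apply]
      rw [skipFun_lt (by omega : (0:ℕ) < q₂ + d - q₁)]
      simpa using ha1
    congr 1
    · -- first B
      refine List.map_congr_left fun j hj => ?_
      rw [List.mem_range] at hj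
      rw [skipFun_lt (by omega : 1 + j < q₂ + d - q₁)]
      congr 1; omega
    congr 1
    · -- [a] at q₂
      rw [show List.range 1 = [0] from rfl]
      simp only [List.map_cons, List.map_nil, Function.comp_apply]
      rw [skipFun_lt (by omega : 1 + (q₂ - q₁ - 1 + 0) < q₂ + d - q₁)]
      rw [show q₁ + (1 + (q₂ - q₁ - 1 + 0)) = q₂ by omega]
      simpa using ha2
    congr 1
    · -- first C
      refine List.map_congr_left fun j hj => ?_
      rw [List.mem_range] at hj
      rw [skipFun_lt (by omega : 1 + (q₂ - q₁ - 1 + (1 + j)) < q₂ + d - q₁)]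
      congr 1; omega
    congr 1
    · -- [a] at q₃
      rw [show List.range 1 = [0] from rfl]
      simp only [List.map_cons, List.map_nil, Function.comp_apply]
      rw [skipFun_lt (by omega : 1 + (q₂ - q₁ - 1 + (1 + (q₃ - q₂ - 1 + 0))) < q₂ + d - q₁)]
      rw [show q₁ + (1 + (q₂ - q₁ - 1 + (1 + (q₃ - q₂ - 1 + 0)))) = q₃ by omega]
      simpa using ha3
    congr 1
    · -- D
      refine List.map_congr_left fun j hj => ?_
      rw [List.mem_range] at hj
      rw [skipFun_lt (by omega :
        1 + (q₂ - q₁ - 1 + (1 + (q₃ - q₂ - 1 + (1 + j)))) < q₂ + d - q₁)]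
      congr 1; omega
    congr 1
    · -- [a] at q₁ + d
      rw [show List.range 1 = [0] from rfl]
      simp only [List.map_cons, List.map_nil, Function.comp_apply]
      rw [skipFun_lt (by omega :
        1 + (q₂ - q₁ - 1 + (1 + (q₃ - q₂ - 1 + (1 + (q₁ + d - q₃ - 1 + 0))))) < q₂ + d - q₁)]
      rw [show q₁ + (1 + (q₂ - q₁ - 1 + (1 + (q₃ - q₂ - 1 + (1 + (q₁ + d - q₃ - 1 + 0))))))
          = q₁ + d by omega]
      rw [hsame' q₁ h1 (by omega), ha1]
    congr 1
    · -- second B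
      refine List.map_congr_left fun j hj => ?_
      rw [List.mem_range] at hj
      rw [skipFun_lt (by omega :
        1 + (q₂ - q₁ - 1 + (1 + (q₃ - q₂ - 1 + (1 + (q₁ + d - q₃ - 1 + (1 + j))))))
          < q₂ + d - q₁)]
      rw [show q₁ + (1 + (q₂ - q₁ - 1 + (1 + (q₃ - q₂ - 1 + (1 + (q₁ + d - q₃ - 1 + (1 + j)))))))
          = (q₁ + 1 + j) + d by omega]
      exact hsame' (q₁ + 1 + j) (by omega) (by omega)
    congr 1
    · -- second C
      refine List.map_congr_left fun j hj => ?_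
      rw [List.mem_range] at hj
      rw [skipFun_ge (by omega :
        ¬ 1 + (q₂ - q₁ - 1 + (1 + (q₃ - q₂ - 1 + (1 + (q₁ + d - q₃ - 1 +
          (1 + (q₂ - q₁ - 1 + j))))))) < q₂ + d - q₁)]
      rw [show q₁ + (1 + (q₂ - q₁ - 1 + (1 + (q₃ - q₂ - 1 + (1 + (q₁ + d - q₃ - 1 +
          (1 + (q₂ - q₁ - 1 + j)))))))) + 1 = (q₂ + 1 + j) + d by omega]
      exact hsame' (q₂ + 1 + j) (by omega) (by omega)
    · -- last [a] at q₃ + d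
      rw [show List.range 1 = [0] from rfl]
      simp only [List.map_cons, List.map_nil, Function.comp_apply]
      rw [skipFun_ge (by omega :
        ¬ 1 + (q₂ - q₁ - 1 + (1 + (q₃ - q₂ - 1 + (1 + (q₁ + d - q₃ - 1 +
          (1 + (q₂ - q₁ - 1 + (q₃ - q₂ - 1 + 0)))))))) < q₂ + d - q₁)]
      rw [show q₁ + (1 + (q₂ - q₁ - 1 + (1 + (q₃ - q₂ - 1 + (1 + (q₁ + d - q₃ - 1 +
          (1 + (q₂ - q₁ - 1 + (q₃ - q₂ - 1 + 0))))))))) + 1 = q₃ + d by omega]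
      rw [hsame' q₃ (by omega) h3, ha3]
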